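/- arXiv:1612.04578 — 2 statements merged into one kernel-verified Lean document; each statement's English description precedes it below -/
import Mathlib

section
/- Let U ⊆ ℝⁿ be a bounded open set whose closure is C¹-diffeomorphic to a closed ball via φ : cl(U) → cl(B(0,r)) with φ mapping U onto B(0,r), and suppose 0 ∈ B(0,r). Let μ > 0, let O ⊆ U \ B_μ(∂U), and let η > 0. Then there exists ρ > 0 such that for every θ ∈ SO(n) with 0 < ‖θ − id‖ < ρ there exists a diffeomorphism ζ : U → U with the following properties, where Ξ_θ := φ⁻¹ ∘ θ ∘ φ : U → U: (i) ζ(B_{μ/4}(O)) ⊆ B_{μ/2}(O) and ζ(y) = Ξ_θ(y) for all y ∈ B_{μ/4}(O); (ii) ζ(y) = y for all y ∈ U \ B_{3μ/4}(O); (iii) ‖ζ − id‖_{C¹(U)} ≤ η. -/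
open MeasureTheory Metric Set Manifold Set.Notation

set_option maxHeartbeats 4000000
set_option synthInstance.maxHeartbeats 200000

noncomputable section

abbrev Euc (n : ℕ) := EuclideanSpace ℝ (Fin n)

def C1Dist (n : ℕ) (U : Set (Euc n)) (f g : Euc n → Euc n) : ℝ :=
  (⨆ x : U, ‖f x - g x‖) + (⨆ x : U, ‖fderiv ℝ f x - fderiv ℝ g x‖)

/-- Operator-norm distance from a linear isometry equivalence of ℝⁿ to the identity. -/
def opDistId (n : ℕ) (θ : Euc n ≃ₗᵢ[ℝ] Euc n) : ℝ :=
  ‖θ.toLinearIsometry.toContinuousLinearMap - ContinuousLinearMap.id ℝ (Euc n)‖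

/-- `θ` belongs to `SO(n)`: it is a linear isometry of ℝⁿ with determinant 1. -/
def InSO (n : ℕ) (θ : Euc n ≃ₗᵢ[ℝ] Euc n) : Prop :=
  LinearMap.det (θ.toLinearEquiv : Euc n →ₗ[ℝ] Euc n) = 1

/-- If `o ∈ U` (open) and `o` is not in the `μ`-thickening of the frontier of `U`,
then the ball `B(o, μ)` is contained in `U`. -/
lemma aux_ball_subset {n : ℕ} {U : Set (Euc n)} (hU : IsOpen U) {o : Euc n} (ho : o ∈ U)
    {μ : ℝ} (hth : o ∉ Metric.thickening μ (frontier U)) : Metric.ball o μ ⊆ U := by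
  intro z hz
  by_contra hzU
  have hμ : 0 < μ := pos_of_mem_ball hz
  have hdisj : Disjoint (frontier U) (ball o μ) := by
    rw [Set.disjoint_left]
    intro w hw hwb
    exact hth (Metric.mem_thickening_iff.mpr ⟨w, hw, by simpa [dist_comm] using hwb⟩)
  have hclopen : IsClopen ((ball o μ) ↓∩ U) := isClopen_preimage_val hU hdisj
  have : PreconnectedSpace (ball o μ) :=
    Subtype.preconnectedSpace (convex_ball o μ).isPreconnected
  rcases isClopen_iff.mp hclopen with h | h
  · have : (⟨o, mem_ball_self hμ⟩ : ball o μ) ∈ ((ball o μ) ↓∩ U) := ho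
    rw [h] at this; exact this
  · have : (⟨z, hz⟩ : ball o μ) ∈ ((ball o μ) ↓∩ U) := by rw [h]; trivial
    exact hzU this

/-- smooth cutoff, plain normed-space version -/
lemma aux_bump {n : ℕ} {s t : Set (Euc n)} (hs : IsClosed s) (ht : IsClosed t)
    (hd : Disjoint s t) :
    ∃ g : Euc n → ℝ, ContDiff ℝ ((⊤:ℕ∞):WithTop ℕ∞) g ∧ EqOn g 0 s ∧ EqOn g 1 t ∧
      ∀ x, g x ∈ Icc (0:ℝ) 1 := by
  obtain ⟨f, h0, h1, h01⟩ := exists_contMDiffMap_zero_one_of_isClosed (n := (⊤:ℕ∞)) (𝓘(ℝ, Euc n)) hs ht hd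
  exact ⟨f, contMDiff_iff_contDiff.mp f.contMDiff, h0, h1, h01⟩

lemma aux_le_succ_mul2 {a b : ℝ} (ha : 0 ≤ a) (hb : 0 ≤ b) : a * b ≤ (a+1)*(b+1) := by
  nlinarith

lemma aux_le_succ_mul3 {a b c : ℝ} (ha : 0 ≤ a) (hb : 0 ≤ b) (hc : 0 ≤ c) :
    a * (b * c) ≤ (a+1)*((b+1)*(c+1)) := by
  nlinarith [mul_nonneg ha hb, mul_nonneg hb hc, mul_nonneg ha hc,
    mul_nonneg (mul_nonneg ha hb) hc]

/-- **Key lemma.** Let `U` be a bounded open set whose closure is C¹-diffeomorphic to a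
closed ball `cl B(0,r)` via `φ` (with inverse `φinv`), `φ` mapping `U` onto `B(0,r)`, `r > 0`.
Let `μ > 0`, `O ⊆ U \ B_μ(∂U)` and `η > 0`. Then there is `ρ > 0` such that for each
`θ ∈ SO(n)` with `0 < ‖θ − id‖ < ρ` there is a diffeomorphism `ζ : U → U` with:
(i) `ζ(B_{μ/4}(O)) ⊆ B_{μ/2}(O)` and `ζ = Ξ_θ := φ⁻¹ ∘ θ ∘ φ` on `B_{μ/4}(O)`;
(ii) `ζ = id` on `U \ B_{3μ/4}(O)`;
(iii) `‖ζ − id‖_{C¹(U)} ≤ η`. -/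
theorem stmt_4 (n : ℕ) (U : Set (Euc n)) (hUopen : IsOpen U)
    (hUbd : Bornology.IsBounded U)
    (r : ℝ) (hr : 0 < r)
    (φ φinv : Euc n → Euc n)
    (hφ : ContDiffOn ℝ 1 φ (closure U))
    (hφinv : ContDiffOn ℝ 1 φinv (Metric.closedBall 0 r))
    (hφbij : Set.BijOn φ (closure U) (Metric.closedBall 0 r))
    (hφinvOn : Set.InvOn φinv φ (closure U) (Metric.closedBall 0 r))
    (hφU : φ '' U = Metric.ball 0 r)
    (μ : ℝ) (hμ : 0 < μ)
    (O : Set (Euc n)) (hO : O ⊆ U \ Metric.thickening μ (frontier U))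
    (η : ℝ) (hη : 0 < η) :
    ∃ ρ > 0, ∀ θ : Euc n ≃ₗᵢ[ℝ] Euc n, InSO n θ →
      0 < opDistId n θ → opDistId n θ < ρ →
      ∃ ζ ζinv : Euc n → Euc n,
        ContDiffOn ℝ 1 ζ U ∧ ContDiffOn ℝ 1 ζinv U ∧
        Set.BijOn ζ U U ∧ Set.InvOn ζinv ζ U U ∧
        (ζ '' (Metric.thickening (μ/4) O) ⊆ Metric.thickening (μ/2) O) ∧
        (∀ y ∈ Metric.thickening (μ/4) O, ζ y = φinv (θ (φ y))) ∧
        (∀ y ∈ U \ Metric.thickening (3*μ/4) O, ζ y = y) ∧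
        C1Dist n U ζ id ≤ η := by
  classical
  -- basic geometry of O and U
  have hballO : ∀ o ∈ O, ball o μ ⊆ U := fun o ho =>
    aux_ball_subset hUopen (hO ho).1 (hO ho).2
  have hthickU : ∀ {δ : ℝ}, δ < μ → Metric.thickening δ O ⊆ U := by
    intro δ hδ y hy
    obtain ⟨o, hoO, hdy⟩ := Metric.mem_thickening_iff.mp hy
    exact hballO o hoO (mem_ball.mpr (lt_trans hdy hδ))
  -- the cutoff function g
  have h58 : (5*μ/8 : ℝ) < 3*μ/4 := by linarith
  have hcsub : Metric.cthickening (μ/4) O ⊆ Metric.thickening (5*μ/8) O :=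
    Metric.cthickening_subset_thickening' (by linarith) (by linarith) O
  obtain ⟨g, hgC, hg0, hg1, hg01⟩ :=
    aux_bump (isOpen_thickening (δ := 5*μ/8) (E := O)).isClosed_compl
      (Metric.isClosed_cthickening (δ := μ/4) (E := O))
      (by rw [Set.disjoint_left]; intro x hx hx2; exact hx (hcsub hx2))
  have hgC1 : ContDiff ℝ 1 g := hgC.of_le (by exact_mod_cast le_top)
  -- derivative bound for g
  have hKcpt : IsCompact (Metric.cthickening (5*μ/8) O) := by
    refine Metric.isCompact_of_isClosed_isBounded (Metric.isClosed_cthickening) ?_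
    exact ((hUbd.subset (fun x hx => (hO hx).1)).cthickening)
  have hgV : ∀ x ∉ Metric.cthickening (5*μ/8) O, fderiv ℝ g x = 0 := by
    intro x hx
    have hop : IsOpen (Metric.cthickening (5*μ/8) O)ᶜ := (Metric.isClosed_cthickening).isOpen_compl
    have hev : g =ᶠ[nhds x] fun _ => 0 := by
      filter_upwards [hop.mem_nhds hx] with y hy
      exact hg0 (fun h => hy (Metric.thickening_subset_cthickening _ _ h))
    rw [hev.fderiv_eq, fderiv_fun_const]; rfl
  obtain ⟨L0, hL0⟩ := hKcpt.exists_bound_of_continuousOn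
    ((hgC.continuous_fderiv (by simp)).continuousOn
      (s := Metric.cthickening (5*μ/8) O))
  set L : ℝ := max L0 0 with hLdef
  have hL : ∀ x, ‖fderiv ℝ g x‖ ≤ L := by
    intro x
    by_cases hx : x ∈ Metric.cthickening (5*μ/8) O
    · exact (hL0 x hx).trans (le_max_left _ _)
    · rw [hgV x hx]; simp [hLdef]
  have hLnn : 0 ≤ L := le_max_right _ _
  -- derivative of φinv on the closed ball
  have huB : UniqueDiffOn ℝ (Metric.closedBall (0 : Euc n) r) := by
    apply uniqueDiffOn_convex (convex_closedBall _ _)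
    rw [interior_closedBall _ hr.ne']
    exact ⟨0, mem_ball_self hr⟩
  set G : Euc n → (Euc n →L[ℝ] Euc n) :=
    fun z => fderivWithin ℝ φinv (Metric.closedBall 0 r) z with hGdef
  have hGc : ContinuousOn G (Metric.closedBall 0 r) :=
    hφinv.continuousOn_fderivWithin huB le_rfl
  have hφinvmaps : MapsTo φinv (Metric.closedBall 0 r) (closure U) := by
    intro z hz
    obtain ⟨w, hw, rfl⟩ := hφbij.surjOn hz
    rw [hφinvOn.1 hw]; exact hw
  -- left inverse of G z
  have hleft : ∀ z ∈ Metric.closedBall (0:Euc n) r,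
      (fderivWithin ℝ φ (closure U) (φinv z)).comp (G z) = ContinuousLinearMap.id ℝ (Euc n) := by
    intro z hz
    have h1 : HasFDerivWithinAt φinv (G z) (Metric.closedBall 0 r) z :=
      (hφinv.differentiableOn one_ne_zero z hz).hasFDerivWithinAt
    have h2 : HasFDerivWithinAt φ (fderivWithin ℝ φ (closure U) (φinv z))
        (closure U) (φinv z) :=
      (hφ.differentiableOn one_ne_zero _ (hφinvmaps hz)).hasFDerivWithinAt
    have hcomp := h2.comp z h1 hφinvmaps
    have hid : HasFDerivWithinAt (fun w : Euc n => w)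
        (ContinuousLinearMap.id ℝ (Euc n)) (Metric.closedBall 0 r) z := hasFDerivWithinAt_id z _
    have hcongr : HasFDerivWithinAt (fun w : Euc n => w)
        ((fderivWithin ℝ φ (closure U) (φinv z)).comp (G z)) (Metric.closedBall 0 r) z := by
      exact hcomp.congr (fun w hw => (hφinvOn.2 hw).symm) (hφinvOn.2 hz).symm
    exact (huB z hz).eq hcongr hid
  have hGinj : ∀ z ∈ Metric.closedBall (0:Euc n) r, Function.Injective (G z) := by
    intro z hz v w hvw
    have h1 := congrArg (fun (T : Euc n →L[ℝ] Euc n) => T v) (hleft z hz)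
    have h2 := congrArg (fun (T : Euc n →L[ℝ] Euc n) => T w) (hleft z hz)
    simp only [ContinuousLinearMap.comp_apply, ContinuousLinearMap.id_apply] at h1 h2
    rw [← h1, ← h2, hvw]
  have hGunit : ∀ z ∈ Metric.closedBall (0:Euc n) r, IsUnit (G z) := by
    intro z hz
    have hinj := hGinj z hz
    have hsurj : Function.Surjective (G z) :=
      (LinearMap.injective_iff_surjective (f := ((G z : Euc n →L[ℝ] Euc n) :
        Euc n →ₗ[ℝ] Euc n))).mp hinj
    exact ContinuousLinearMap.isUnit_iff_bijective.mpr ⟨hinj, hsurj⟩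
  -- bounds M1 (for ‖G‖) and M2 (for ‖G⁻¹‖ = ‖Dφ‖)
  obtain ⟨M1₀, hM1₀⟩ := (isCompact_closedBall (0:Euc n) r).exists_bound_of_continuousOn hGc
  set M1 : ℝ := max M1₀ 0 with hM1def
  have hM1 : ∀ z ∈ Metric.closedBall (0:Euc n) r, ‖G z‖ ≤ M1 :=
    fun z hz => (hM1₀ z hz).trans (le_max_left _ _)
  have hM1nn : (0:ℝ) ≤ M1 := le_max_right _ _
  have hGinvc : ContinuousOn (fun z => Ring.inverse (G z)) (Metric.closedBall (0:Euc n) r) := by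
    intro z hz
    have hu := hGunit z hz
    have h1 : ContinuousAt Ring.inverse (G z) := by
      have := NormedRing.inverse_continuousAt hu.unit
      rwa [hu.unit_spec] at this
    exact h1.comp_continuousWithinAt (hGc z hz)
  obtain ⟨M2₀, hM2₀⟩ := (isCompact_closedBall (0:Euc n) r).exists_bound_of_continuousOn hGinvc
  set M2 : ℝ := max M2₀ 0 with hM2def
  have hM2 : ∀ z ∈ Metric.closedBall (0:Euc n) r, ‖Ring.inverse (G z)‖ ≤ M2 :=
    fun z hz => (hM2₀ z hz).trans (le_max_left _ _)
  have hM2nn : (0:ℝ) ≤ M2 := le_max_right _ _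
  -- Lipschitz bound for φinv on the closed ball
  have hlipφinv : LipschitzOnWith (Real.toNNReal M1) φinv (Metric.closedBall (0:Euc n) r) := by
    apply Convex.lipschitzOnWith_of_nnnorm_fderivWithin_le
      (hφinv.differentiableOn one_ne_zero) ?_ (convex_closedBall _ _)
    intro z hz
    simpa [← NNReal.coe_le_coe, Real.coe_toNNReal _ hM1nn] using hM1 z hz
  -- choice of ε and ρ
  set ε : ℝ := min (min (η/2) (μ/8)) (1/2) with hεdef
  have hεpos : 0 < ε := by
    apply lt_min (lt_min (by linarith) (by linarith)); norm_num
  have hεη : ε ≤ η/2 := (min_le_left _ _).trans (min_le_left _ _)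
  have hεμ : ε ≤ μ/8 := (min_le_left _ _).trans (min_le_right _ _)
  have hεhalf : ε ≤ 1/2 := min_le_right _ _
  set C : ℝ := (L+1) * (M1+1) * (M2+1) * (r+1) with hCdef
  have hCpos : 0 < C := by positivity
  -- uniform continuity of G
  have hGuc := ((isCompact_closedBall (0:Euc n) r).uniformContinuousOn_of_continuous hGc)
  rw [Metric.uniformContinuousOn_iff] at hGuc
  obtain ⟨δω, hδωpos, hδω⟩ := hGuc (ε / (3 * (M2+1))) (by positivity)
  set ρ : ℝ := min (δω / (r+1)) (ε / (3*C)) with hρdef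
  have hρpos : 0 < ρ := lt_min (by positivity) (by positivity)
  refine ⟨ρ, hρpos, ?_⟩
  intro θ _ hθpos hθρ
  set d : ℝ := opDistId n θ with hddef
  have hdnn : 0 ≤ d := le_of_lt hθpos
  set Tθ : Euc n →L[ℝ] Euc n := θ.toLinearIsometry.toContinuousLinearMap with hTθdef
  have hTθ_apply : ∀ v, Tθ v = θ v := fun v => rfl
  have hTθnorm : ‖Tθ‖ ≤ 1 := by
    apply ContinuousLinearMap.opNorm_le_bound _ zero_le_one
    intro v; rw [hTθ_apply, θ.norm_map, one_mul]
  have hθdist : ∀ v : Euc n, ‖θ v - v‖ ≤ d * ‖v‖ := by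
    intro v
    have := (Tθ - ContinuousLinearMap.id ℝ (Euc n)).le_opNorm v
    have h' : ‖Tθ - ContinuousLinearMap.id ℝ (Euc n)‖ = d := rfl
    rw [h'] at this
    simpa [hTθ_apply] using this
  -- definitions
  set Ξ : Euc n → Euc n := fun y => φinv (θ (φ y)) with hΞdef
  set F : Euc n → Euc n := fun y => Ξ y - y with hFdef
  set h : Euc n → Euc n := fun y => g y • F y with hhdef
  set ζ : Euc n → Euc n := fun y => y + h y with hζdef
  -- membership facts for x ∈ U
  have hφmem : ∀ x ∈ U, φ x ∈ Metric.ball (0:Euc n) r := by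
    intro x hx; rw [← hφU]; exact mem_image_of_mem φ hx
  have hθφmem : ∀ x ∈ U, θ (φ x) ∈ Metric.ball (0:Euc n) r := by
    intro x hx
    have := hφmem x hx
    simpa [mem_ball, dist_eq_norm, θ.norm_map] using this
  have hclosnhds : ∀ x ∈ U, closure U ∈ nhds x := fun x hx =>
    Filter.mem_of_superset (hUopen.mem_nhds hx) subset_closure
  have hballnhds : ∀ z ∈ Metric.ball (0:Euc n) r, Metric.closedBall (0:Euc n) r ∈ nhds z :=
    fun z hz => Filter.mem_of_superset (isOpen_ball.mem_nhds hz) ball_subset_closedBall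
  have hφdiff : ∀ x ∈ U, DifferentiableAt ℝ φ x := fun x hx =>
    ((hφ.contDiffAt (hclosnhds x hx)).differentiableAt one_ne_zero)
  have hφinvdiff : ∀ z ∈ Metric.ball (0:Euc n) r, DifferentiableAt ℝ φinv z := fun z hz =>
    ((hφinv.contDiffAt (hballnhds z hz)).differentiableAt one_ne_zero)
  have hGeq : ∀ z ∈ Metric.ball (0:Euc n) r, G z = fderiv ℝ φinv z := fun z hz =>
    fderivWithin_of_mem_nhds (hballnhds z hz)
  -- pointwise and derivative smallness of F on U
  have hFsmall : ∀ x ∈ U, ‖F x‖ ≤ M1 * (d * r) := by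
    intro x hx
    have h1 : φ x ∈ Metric.closedBall (0:Euc n) r := ball_subset_closedBall (hφmem x hx)
    have h2 : θ (φ x) ∈ Metric.closedBall (0:Euc n) r := ball_subset_closedBall (hθφmem x hx)
    have hxx : φinv (φ x) = x := hφinvOn.1 (subset_closure hx)
    have hFx : F x = φinv (θ (φ x)) - φinv (φ x) := by rw [hFdef]; simp [hΞdef, hxx]
    have hlip := hlipφinv.dist_le_mul _ h2 _ h1
    rw [hFx, ← dist_eq_norm]
    calc dist (φinv (θ (φ x))) (φinv (φ x)) ≤ M1 * dist (θ (φ x)) (φ x) := by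
          have : (Real.toNNReal M1 : ℝ) = M1 := Real.coe_toNNReal _ hM1nn
          rw [← this]; exact hlip
      _ ≤ M1 * (d * r) := by
          apply mul_le_mul_of_nonneg_left _ hM1nn
          rw [dist_eq_norm]
          calc ‖θ (φ x) - φ x‖ ≤ d * ‖φ x‖ := hθdist _
            _ ≤ d * r := by
                apply mul_le_mul_of_nonneg_left _ hdnn
                have := hφmem x hx; rw [mem_ball, dist_eq_norm, sub_zero] at this; linarith
  have hMdr : M1 * (d * r) ≤ ε / 3 := by
    have h1 : M1 * r ≤ C := by
      calc M1 * r ≤ (M1+1)*(r+1) := aux_le_succ_mul2 hM1nn hr.le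
        _ = 1 * ((M1+1)*(r+1)) := (one_mul _).symm
        _ ≤ ((L+1)*(M2+1)) * ((M1+1)*(r+1)) := by
            apply mul_le_mul_of_nonneg_right _ (by positivity)
            nlinarith [hLnn, hM2nn]
        _ = C := by rw [hCdef]; ring
    have h2 : d < ε / (3*C) := lt_of_lt_of_le hθρ (min_le_right _ _)
    calc M1 * (d * r) = (M1 * r) * d := by ring
      _ ≤ C * d := mul_le_mul_of_nonneg_right h1 hdnn
      _ ≤ C * (ε / (3*C)) := mul_le_mul_of_nonneg_left h2.le hCpos.le
      _ = ε / 3 := by field_simp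
  have hFε : ∀ x ∈ U, ‖F x‖ ≤ ε / 3 := fun x hx => (hFsmall x hx).trans hMdr
  -- derivative of Ξ on U and its smallness
  have hDer : ∀ x ∈ U, HasFDerivAt Ξ
      ((G (θ (φ x))).comp (Tθ.comp (fderiv ℝ φ x))) x := by
    intro x hx
    have h1 : HasFDerivAt (fun y => θ (φ y)) (Tθ.comp (fderiv ℝ φ x)) x :=
      (Tθ.hasFDerivAt.comp x (hφdiff x hx).hasFDerivAt)
    have h2 : HasFDerivAt φinv (G (θ (φ x))) (θ (φ x)) := by
      rw [hGeq _ (hθφmem x hx)]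
      exact (hφinvdiff _ (hθφmem x hx)).hasFDerivAt
    exact h2.comp x h1
  have hABinv : ∀ x ∈ U, (G (φ x)).comp (fderiv ℝ φ x) = ContinuousLinearMap.id ℝ (Euc n)
      ∧ (fderiv ℝ φ x).comp (G (φ x)) = ContinuousLinearMap.id ℝ (Euc n) := by
    intro x hx
    constructor
    · have hev : (φinv ∘ φ) =ᶠ[nhds x] id := by
        filter_upwards [hUopen.mem_nhds hx] with y hy
        exact hφinvOn.1 (subset_closure hy)
      have h1 : fderiv ℝ (φinv ∘ φ) x = ContinuousLinearMap.id ℝ (Euc n) := by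
        rw [hev.fderiv_eq, fderiv_id]
      rw [← h1, fderiv_comp x (hφinvdiff _ (hφmem x hx)) (hφdiff x hx), hGeq _ (hφmem x hx)]
    · have h2 := hleft (φ x) (ball_subset_closedBall (hφmem x hx))
      have hxx : φinv (φ x) = x := hφinvOn.1 (subset_closure hx)
      rw [hxx] at h2
      rw [fderivWithin_of_mem_nhds (hclosnhds x hx)] at h2
      exact h2
  have hBbound : ∀ x ∈ U, ‖fderiv ℝ φ x‖ ≤ M2 := by
    intro x hx
    obtain ⟨hAB, hBA⟩ := hABinv x hx
    have : Ring.inverse (G (φ x)) = fderiv ℝ φ x :=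
      Ring.inverse_unit ⟨G (φ x), fderiv ℝ φ x, hAB, hBA⟩
    rw [← this]
    exact hM2 _ (ball_subset_closedBall (hφmem x hx))
  have hDΞsmall : ∀ x ∈ U,
      ‖(G (θ (φ x))).comp (Tθ.comp (fderiv ℝ φ x)) - ContinuousLinearMap.id ℝ (Euc n)‖
        ≤ ε/3 + ε/3 := by
    intro x hx
    obtain ⟨hAB, _⟩ := hABinv x hx
    set A' := G (θ (φ x))
    set A := G (φ x)
    set B := fderiv ℝ φ x
    have hkey : A'.comp (Tθ.comp B) - ContinuousLinearMap.id ℝ (Euc n)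
        = ((A' - A).comp (Tθ.comp B)) + (A.comp ((Tθ - ContinuousLinearMap.id ℝ (Euc n)).comp B)) := by
      have hid' : ContinuousLinearMap.id ℝ (Euc n) = A.comp B := hAB.symm
      conv_lhs => rw [hid']
      refine ContinuousLinearMap.ext fun v => ?_
      simp only [ContinuousLinearMap.comp_apply, ContinuousLinearMap.sub_apply,
        ContinuousLinearMap.add_apply, ContinuousLinearMap.id_apply, map_sub]
      abel
    rw [hkey]
    have hA'A : ‖A' - A‖ ≤ ε / (3 * (M2+1)) := by
      have h1 : φ x ∈ Metric.closedBall (0:Euc n) r := ball_subset_closedBall (hφmem x hx)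
      have h2 : θ (φ x) ∈ Metric.closedBall (0:Euc n) r := ball_subset_closedBall (hθφmem x hx)
      have hd1 : dist (θ (φ x)) (φ x) < δω := by
        rw [dist_eq_norm]
        calc ‖θ (φ x) - φ x‖ ≤ d * ‖φ x‖ := hθdist _
          _ ≤ d * r := by
              apply mul_le_mul_of_nonneg_left _ hdnn
              have := hφmem x hx; rw [mem_ball, dist_eq_norm, sub_zero] at this; linarith
          _ ≤ d * (r+1) := by apply mul_le_mul_of_nonneg_left (by linarith) hdnn
          _ < ρ * (r+1) := by
              apply mul_lt_mul_of_pos_right hθρ (by linarith)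
          _ ≤ δω := by
              have := min_le_left (δω / (r+1)) (ε / (3*C))
              rw [← hρdef] at this
              calc ρ * (r+1) ≤ (δω / (r+1)) * (r+1) :=
                    mul_le_mul_of_nonneg_right this (by linarith)
                _ = δω := by field_simp
      have := hδω _ h2 _ h1 hd1
      rw [dist_eq_norm] at this
      exact this.le
    have hterm1 : ‖(A' - A).comp (Tθ.comp B)‖ ≤ ε/3 := by
      calc ‖(A' - A).comp (Tθ.comp B)‖ ≤ ‖A' - A‖ * ‖Tθ.comp B‖ :=
            ContinuousLinearMap.opNorm_comp_le _ _
        _ ≤ (ε / (3 * (M2+1))) * (1 * M2) := by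
            apply mul_le_mul hA'A _ (norm_nonneg _) (by positivity)
            calc ‖Tθ.comp B‖ ≤ ‖Tθ‖ * ‖B‖ := ContinuousLinearMap.opNorm_comp_le _ _
              _ ≤ 1 * M2 := mul_le_mul hTθnorm (hBbound x hx) (norm_nonneg _) zero_le_one
        _ ≤ ε/3 := by
            rw [one_mul]
            rw [div_mul_eq_mul_div, div_le_div_iff₀ (by positivity) (by norm_num)]
            nlinarith [hεpos.le, hM2nn]
    have hterm2 : ‖A.comp ((Tθ - ContinuousLinearMap.id ℝ (Euc n)).comp B)‖ ≤ ε/3 := by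
      have hTd : ‖Tθ - ContinuousLinearMap.id ℝ (Euc n)‖ = d := rfl
      calc ‖A.comp ((Tθ - ContinuousLinearMap.id ℝ (Euc n)).comp B)‖
          ≤ ‖A‖ * ‖(Tθ - ContinuousLinearMap.id ℝ (Euc n)).comp B‖ :=
            ContinuousLinearMap.opNorm_comp_le _ _
        _ ≤ M1 * (d * M2) := by
            apply mul_le_mul (hM1 _ (ball_subset_closedBall (hφmem x hx))) _
              (norm_nonneg _) hM1nn
            calc ‖(Tθ - ContinuousLinearMap.id ℝ (Euc n)).comp B‖
                ≤ ‖Tθ - ContinuousLinearMap.id ℝ (Euc n)‖ * ‖B‖ :=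
                  ContinuousLinearMap.opNorm_comp_le _ _
              _ ≤ d * M2 := by rw [hTd]; exact mul_le_mul_of_nonneg_left (hBbound x hx) hdnn
        _ ≤ ε/3 := by
            have h1 : M1 * M2 ≤ C := by
              calc M1 * M2 ≤ (M1+1)*(M2+1) := aux_le_succ_mul2 hM1nn hM2nn
                _ = 1 * ((M1+1)*(M2+1)) := (one_mul _).symm
                _ ≤ ((L+1)*(r+1)) * ((M1+1)*(M2+1)) := by
                    apply mul_le_mul_of_nonneg_right _ (by positivity)
                    nlinarith [hLnn, hr.le]
                _ = C := by rw [hCdef]; ring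
            have h2 : d ≤ ε / (3*C) := (lt_of_lt_of_le hθρ (min_le_right _ _)).le
            calc M1 * (d * M2) = (M1 * M2) * d := by ring
              _ ≤ C * (ε / (3*C)) := by
                  apply mul_le_mul h1 h2 hdnn hCpos.le
              _ = ε / 3 := by field_simp
    calc ‖(A' - A).comp (Tθ.comp B) + A.comp ((Tθ - ContinuousLinearMap.id ℝ (Euc n)).comp B)‖
        ≤ ‖(A' - A).comp (Tθ.comp B)‖ + ‖A.comp ((Tθ - ContinuousLinearMap.id ℝ (Euc n)).comp B)‖ :=
          norm_add_le _ _
      _ ≤ ε/3 + ε/3 := add_le_add hterm1 hterm2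
  -- smoothness of h and ζ
  have hgbd : ∀ x, ‖g x‖ ≤ 1 := by
    intro x
    rw [Real.norm_eq_abs, abs_le]
    exact ⟨by linarith [(hg01 x).1], (hg01 x).2⟩
  have hΞcda : ∀ x ∈ U, ContDiffAt ℝ 1 Ξ x := by
    intro x hx
    have h1 : ContDiffAt ℝ 1 φ x := hφ.contDiffAt (hclosnhds x hx)
    have h2 : ContDiffAt ℝ 1 φinv (θ (φ x)) :=
      hφinv.contDiffAt (hballnhds _ (hθφmem x hx))
    have h3 : ContDiffAt ℝ 1 (fun y => θ (φ y)) x :=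
      (Tθ.contDiff.contDiffAt).comp x h1
    exact h2.comp x h3
  have hsubU : Metric.cthickening (5*μ/8) O ⊆ U := by
    refine subset_trans (Metric.cthickening_subset_thickening' (by linarith) h58 O) ?_
    exact hthickU (by linarith)
  have hVeq : ∀ x ∈ (Metric.cthickening (5*μ/8) O)ᶜ, h =ᶠ[nhds x] (fun _ => (0:Euc n)) := by
    intro x hx
    filter_upwards [(Metric.isClosed_cthickening).isOpen_compl.mem_nhds hx] with y hy
    have : g y = 0 := hg0 (fun hmem => hy (Metric.thickening_subset_cthickening _ _ hmem))
    simp [hhdef, this]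
  have hhcd : ∀ x, ContDiffAt ℝ 1 h x := by
    intro x
    by_cases hx : x ∈ U
    · exact ((hgC1.contDiffAt).smul ((hΞcda x hx).sub contDiffAt_id))
    · have hx' : x ∈ (Metric.cthickening (5*μ/8) O)ᶜ := fun hmem => hx (hsubU hmem)
      exact (contDiffAt_const (c := (0:Euc n))).congr_of_eventuallyEq (hVeq x hx')
  have hhC : ContDiff ℝ 1 h := contDiff_iff_contDiffAt.mpr hhcd
  have hhdiff : Differentiable ℝ h := hhC.differentiable one_ne_zero
  have hζC : ContDiff ℝ 1 ζ := contDiff_id.add hhC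
  -- bound on h and its derivative
  have hhsmall : ∀ x ∈ U, ‖h x‖ ≤ ε := by
    intro x hx
    rw [hhdef]
    calc ‖g x • F x‖ = ‖g x‖ * ‖F x‖ := norm_smul _ _
      _ ≤ 1 * (ε/3) := mul_le_mul (hgbd x) (hFε x hx) (norm_nonneg _) zero_le_one
      _ ≤ ε := by linarith
  have hDhsmall : ∀ x, ‖fderiv ℝ h x‖ ≤ ε := by
    intro x
    by_cases hx : x ∈ U
    · have hΞd : DifferentiableAt ℝ Ξ x := ((hΞcda x hx).differentiableAt one_ne_zero)
      have hFd : DifferentiableAt ℝ F x := hΞd.sub differentiableAt_id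
      have hfd : fderiv ℝ h x = g x • fderiv ℝ F x + (fderiv ℝ g x).smulRight (F x) :=
        fderiv_smul (hgC1.differentiable one_ne_zero x) hFd
      have hFfd : fderiv ℝ F x =
          (G (θ (φ x))).comp (Tθ.comp (fderiv ℝ φ x)) - ContinuousLinearMap.id ℝ (Euc n) := by
        have h1 : fderiv ℝ Ξ x = (G (θ (φ x))).comp (Tθ.comp (fderiv ℝ φ x)) :=
          (hDer x hx).fderiv
        rw [hFdef, fderiv_fun_sub hΞd differentiableAt_fun_id, h1, fderiv_id']
      rw [hfd]
      calc ‖g x • fderiv ℝ F x + (fderiv ℝ g x).smulRight (F x)‖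
          ≤ ‖g x • fderiv ℝ F x‖ + ‖(fderiv ℝ g x).smulRight (F x)‖ := norm_add_le _ _
        _ ≤ 1 * (ε/3 + ε/3) + L * (M1 * (d * r)) := by
            apply add_le_add
            · rw [norm_smul]
              apply mul_le_mul (hgbd x) (by rw [hFfd]; exact hDΞsmall x hx) (norm_nonneg _)
                zero_le_one
            · rw [ContinuousLinearMap.norm_smulRight_apply]
              exact mul_le_mul (hL x) (hFsmall x hx) (norm_nonneg _) hLnn
        _ ≤ (ε/3 + ε/3) + ε/3 := by
            rw [one_mul]
            apply add_le_add le_rfl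
            have h1 : L * (M1 * r) ≤ C := by
              calc L * (M1 * r) ≤ (L+1)*((M1+1)*(r+1)) := aux_le_succ_mul3 hLnn hM1nn hr.le
                _ = 1 * ((L+1)*((M1+1)*(r+1))) := (one_mul _).symm
                _ ≤ (M2+1) * ((L+1)*((M1+1)*(r+1))) := by
                    apply mul_le_mul_of_nonneg_right _ (by positivity)
                    nlinarith [hM2nn]
                _ = C := by rw [hCdef]; ring
            have h2 : d ≤ ε / (3*C) := (lt_of_lt_of_le hθρ (min_le_right _ _)).le
            calc L * (M1 * (d * r)) = (L * (M1 * r)) * d := by ring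
              _ ≤ C * (ε / (3*C)) := mul_le_mul h1 h2 hdnn hCpos.le
              _ = ε / 3 := by field_simp
        _ = ε := by ring
    · have hx' : x ∈ (Metric.cthickening (5*μ/8) O)ᶜ := fun hmem => hx (hsubU hmem)
      have : fderiv ℝ h x = 0 := by
        rw [(hVeq x hx').fderiv_eq]
        exact fderiv_const_apply 0
      rw [this, norm_zero]
      exact hεpos.le
  -- ζ is close to id: Lipschitz bound for h and global bijectivity
  have hhlip : LipschitzWith (1/2 : NNReal) h := by
    apply lipschitzWith_of_nnnorm_fderiv_le hhdiff
    intro x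
    have := (hDhsmall x).trans hεhalf
    rw [← NNReal.coe_le_coe]
    simpa using this
  have happrox : ApproximatesLinearOn ζ
      ((ContinuousLinearEquiv.refl ℝ (Euc n) : Euc n ≃L[ℝ] Euc n) : Euc n →L[ℝ] Euc n)
      univ (1/2 : NNReal) := by
    intro x _ y _
    have h1 : ζ x - ζ y - (x - y) = h x - h y := by rw [hζdef]; simp; abel
    have h2 := hhlip.dist_le_mul x y
    rw [dist_eq_norm, dist_eq_norm] at h2
    calc ‖ζ x - ζ y - (ContinuousLinearEquiv.refl ℝ (Euc n)) (x - y)‖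
        = ‖h x - h y‖ := by rw [← h1]; rfl
      _ ≤ (1/2 : NNReal) * ‖x - y‖ := by simpa using h2
  have hsub : Subsingleton (Euc n) ∨
      (1/2 : NNReal) < (‖(((ContinuousLinearEquiv.refl ℝ (Euc n) : Euc n ≃L[ℝ] Euc n).symm :
        Euc n →L[ℝ] Euc n))‖₊)⁻¹ := by
    rcases subsingleton_or_nontrivial (Euc n) with hs | hnt
    · exact Or.inl hs
    · right
      have : ‖(((ContinuousLinearEquiv.refl ℝ (Euc n) : Euc n ≃L[ℝ] Euc n).symm :
          Euc n →L[ℝ] Euc n))‖₊ = 1 := by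
        simp [ContinuousLinearEquiv.refl_symm]
      rw [this, inv_one]
      exact_mod_cast (by norm_num : ((1:ℝ))/2 < 1)
  have hζinj : Function.Injective ζ := fun x y hxy =>
    (happrox.injOn hsub) (mem_univ x) (mem_univ y) hxy
  have hζsurj : Function.Surjective ζ := happrox.surjective hsub
  set ζinv : Euc n → Euc n := Function.invFun ζ with hζinvdef
  have hleftinv : Function.LeftInverse ζinv ζ := Function.leftInverse_invFun hζinj
  have hrightinv : Function.RightInverse ζinv ζ := Function.rightInverse_invFun hζsurj
  -- mapping properties of ζ
  have hζofgz : ∀ x, g x = 0 → ζ x = x := by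
    intro x hgx; rw [hζdef, hhdef]; simp [hgx]
  have hζU : MapsTo ζ U U := by
    intro x hx
    by_cases hgx : g x = 0
    · rw [hζofgz x hgx]; exact hx
    · have hxth : x ∈ Metric.thickening (5*μ/8) O := by
        by_contra hmem
        exact hgx (hg0 hmem)
      obtain ⟨o, hoO, hdo⟩ := Metric.mem_thickening_iff.mp hxth
      apply hballO o hoO
      rw [mem_ball]
      calc dist (ζ x) o ≤ dist (ζ x) x + dist x o := dist_triangle _ _ _
        _ = ‖h x‖ + dist x o := by rw [hζdef]; simp [dist_eq_norm]
        _ < ε + 5*μ/8 := by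
            apply add_lt_add_of_le_of_lt (hhsmall x hx) hdo
        _ ≤ μ/8 + 5*μ/8 := by linarith
        _ < μ := by linarith
  have hζbij : Set.BijOn ζ U U := by
    refine ⟨hζU, hζinj.injOn, ?_⟩
    intro z hz
    refine ⟨ζinv z, ?_, hrightinv z⟩
    by_cases hgx : g (ζinv z) = 0
    · have := hζofgz _ hgx
      rw [hrightinv z] at this
      rw [← this]; exact hz
    · have hxth : ζinv z ∈ Metric.thickening (5*μ/8) O := by
        by_contra hmem
        exact hgx (hg0 hmem)
      exact hthickU (by linarith) hxth
  have hζinvkey : ∀ y : Euc n, ContDiffAt ℝ 1 ζinv (ζ y) := by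
    intro y
    have hDh : ‖-(fderiv ℝ h y)‖ < 1 := by
      rw [norm_neg]
      exact lt_of_le_of_lt ((hDhsmall y).trans hεhalf) (by norm_num)
    set u : (Euc n →L[ℝ] Euc n)ˣ := Units.oneSub (-(fderiv ℝ h y)) hDh with hu
    set e : Euc n ≃L[ℝ] Euc n := ContinuousLinearEquiv.unitsEquiv ℝ (Euc n) u with he
    have hecoe : (e : Euc n →L[ℝ] Euc n)
        = ContinuousLinearMap.id ℝ (Euc n) + fderiv ℝ h y := by
      show (u : Euc n →L[ℝ] Euc n) = _
      rw [hu]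
      show (1 : Euc n →L[ℝ] Euc n) - (-(fderiv ℝ h y)) = _
      rw [sub_neg_eq_add, ContinuousLinearMap.one_def]
    have hfd : HasFDerivAt ζ (e : Euc n →L[ℝ] Euc n) y := by
      rw [hecoe]
      exact (hasFDerivAt_id y).add (hhdiff y).hasFDerivAt
    have hcd : ContDiffAt ℝ 1 ζ y := hζC.contDiffAt
    have hlocinv := hcd.to_localInverse (f' := e) hfd one_ne_zero
    have hev : ζinv =ᶠ[nhds (ζ y)] hcd.localInverse hfd one_ne_zero := by
      filter_upwards [(hcd.hasStrictFDerivAt' hfd one_ne_zero).eventually_right_inverse]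
        with w hw
      exact hζinj (by rw [hrightinv w]; exact hw.symm)
    exact hlocinv.congr_of_eventuallyEq hev
  have hζinvC : ContDiffOn ℝ 1 ζinv U := by
    intro z _
    have hx := hζinvkey (ζinv z)
    rw [hrightinv z] at hx
    exact hx.contDiffWithinAt
  refine ⟨ζ, ζinv, hζC.contDiffOn, hζinvC, hζbij,
    ⟨fun x _ => hleftinv x, fun x _ => hrightinv x⟩, ?_, ?_, ?_, ?_⟩
  · rintro z ⟨x, hxth, rfl⟩
    obtain ⟨o, hoO, hdo⟩ := Metric.mem_thickening_iff.mp hxth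
    have hxU : x ∈ U := hballO o hoO (mem_ball.mpr (lt_trans hdo (by linarith)))
    refine Metric.mem_thickening_iff.mpr ⟨o, hoO, ?_⟩
    calc dist (ζ x) o ≤ dist (ζ x) x + dist x o := dist_triangle _ _ _
      _ = ‖h x‖ + dist x o := by rw [hζdef]; simp [dist_eq_norm]
      _ < ε + μ/4 := add_lt_add_of_le_of_lt (hhsmall x hxU) hdo
      _ ≤ μ/8 + μ/4 := by linarith
      _ < μ/2 := by linarith
  · intro y hy
    have hgy : g y = 1 := hg1 (Metric.thickening_subset_cthickening _ _ hy)
    show y + h y = φinv (θ (φ y))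
    rw [hhdef]
    simp only [hgy, one_smul, hFdef, hΞdef]
    abel
  · rintro y ⟨hyU, hyth⟩
    have hgy : g y = 0 :=
      hg0 (fun hmem => hyth (Metric.thickening_mono (by linarith) O hmem))
    exact hζofgz y hgy
  · rw [C1Dist]
    have hb1 : (⨆ x : U, ‖ζ (x:Euc n) - (id : Euc n → Euc n) (x:Euc n)‖) ≤ η/2 := by
      apply Real.iSup_le _ (by linarith)
      intro x
      simp only [id_eq]
      have hx : ζ (x:Euc n) - (x:Euc n) = h x := by
        rw [hζdef]; simp
      rw [hx]
      exact (hhsmall x x.2).trans hεη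
    have hb2 : (⨆ x : U, ‖fderiv ℝ ζ (x:Euc n) - fderiv ℝ (id : Euc n → Euc n) (x:Euc n)‖) ≤ η/2 := by
      apply Real.iSup_le _ (by linarith)
      intro x
      have hfζ : fderiv ℝ ζ (x:Euc n)
          = ContinuousLinearMap.id ℝ (Euc n) + fderiv ℝ h x :=
        ((hasFDerivAt_id (x:Euc n)).add (hhdiff (x:Euc n)).hasFDerivAt).fderiv
      have hfid : fderiv ℝ (id : Euc n → Euc n) (x:Euc n) = ContinuousLinearMap.id ℝ (Euc n) :=
        fderiv_id
      rw [hfζ, hfid, add_sub_cancel_left]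
      exact (hDhsmall x).trans hεη
    exact le_trans (add_le_add hb1 hb2) (by linarith)

end
end

section
/- Let U ⊆ ℝⁿ be open, let φ : U → φ(U) ⊆ ℝⁿ be a C¹ diffeomorphism onto an open set, and let r > 0 be such that the closed ball cl(B(0,r)) ⊆ φ(U). Set V = φ⁻¹(B(0,r)). Then for every ε > 0 there exists ρ > 0 such that for every θ ∈ SO(n) with ‖θ − id‖ < ρ (operator norm), the map Ξ_θ := φ⁻¹ ∘ θ ∘ φ maps V onto V and satisfies ‖Ξ_θ − id‖_{C¹(V)} ≤ ε. Moreover, if in addition f : U → ℝⁿ is continuously differentiable with f and Df continuous and bounded on cl(V), then ρ can be chosen so that also ‖f ∘ Ξ_θ − f‖_{C¹(V)} ≤ ε. -/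
open MeasureTheory Metric Set

noncomputable section

private lemma mul_bound_aux (c d x e' : ℝ) (hc : 0 ≤ c) (hd : 0 ≤ d) (he : 0 < e')
    (hx0 : 0 ≤ x) (hx : x ≤ e' / (2 * (c + 1) * (d + 1))) : c * x * d ≤ e' / 2 := by
  rw [le_div_iff₀ (by positivity)] at hx
  rw [le_div_iff₀ (by norm_num : (0:ℝ) < 2)]
  nlinarith [mul_nonneg hx0 hc, mul_nonneg hx0 hd, mul_nonneg (mul_nonneg hx0 hc) hd]

set_option maxHeartbeats 1000000 in
/-- For a C¹ diffeomorphism `φ` of an open set `U` onto an open set containing the closed ball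
`cl B(0,r)` and `V = φ⁻¹(B(0,r))`: for every `ε > 0` there is `ρ > 0` such that each
`θ ∈ SO(n)` with `‖θ − id‖ < ρ` yields `Ξ_θ = φ⁻¹ ∘ θ ∘ φ` mapping `V` onto `V` with
`‖Ξ_θ − id‖_{C¹(V)} ≤ ε`; moreover, given a C¹ map `f` with `f` and `Df` continuous and
bounded on `cl V`, also `‖f ∘ Ξ_θ − f‖_{C¹(V)} ≤ ε`. -/
theorem stmt_12 (n : ℕ) (U : Set (Euc n)) (hU : IsOpen U)
    (φ φinv : Euc n → Euc n)
    (hφ : ContDiffOn ℝ 1 φ U) (hφinj : Set.InjOn φ U)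
    (hφim : IsOpen (φ '' U))
    (hφinv : ContDiffOn ℝ 1 φinv (φ '' U))
    (hinv : Set.InvOn φinv φ U (φ '' U))
    (r : ℝ) (hr : 0 < r) (hball : Metric.closedBall (0 : Euc n) r ⊆ φ '' U)
    (V : Set (Euc n)) (hV : V = U ∩ φ ⁻¹' Metric.ball (0 : Euc n) r)
    (f : Euc n → Euc n) (hf : ContDiffOn ℝ 1 f U)
    (hfc : ContinuousOn f (closure V))
    (hfdc : ContinuousOn (fderiv ℝ f) (closure V))
    (hfbdd : ∃ M : ℝ, ∀ x ∈ closure V, ‖f x‖ ≤ M ∧ ‖fderiv ℝ f x‖ ≤ M)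
    (ε : ℝ) (hε : 0 < ε) :
    ∃ ρ > 0, ∀ θ : Euc n ≃ₗᵢ[ℝ] Euc n, InSO n θ → opDistId n θ < ρ →
      (fun y => φinv (θ (φ y))) '' V = V ∧
      C1Dist n V (fun y => φinv (θ (φ y))) id ≤ ε ∧
      C1Dist n V (f ∘ fun y => φinv (θ (φ y))) f ≤ ε := by
  classical
  have hVU : V ⊆ U := by rw [hV]; exact inter_subset_left
  have hVb : ∀ x ∈ V, φ x ∈ ball (0 : Euc n) r := by
    intro x hx; rw [hV] at hx; exact hx.2
  have hballU : ball (0 : Euc n) r ⊆ φ '' U := fun y hy =>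
    hball (ball_subset_closedBall hy)
  have hxV_self : ∀ x ∈ V, φinv (φ x) = x := fun x hx => hinv.1 (hVU hx)
  have hinv_mem : ∀ y ∈ ball (0 : Euc n) r, φinv y ∈ V ∧ φ (φinv y) = y := by
    intro y hy
    obtain ⟨x, hxU, hxy⟩ := hballU hy
    have h2 : φ (φinv y) = y := hinv.2 (hballU hy)
    have h1 : φinv y = x := by rw [← hxy]; exact hinv.1 hxU
    refine ⟨?_, h2⟩
    rw [hV]
    exact ⟨h1 ▸ hxU, by simp only [mem_preimage, h2]; exact hy⟩
  -- the compact set K = φinv '' closedBall r contains closure V and is inside U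
  have hKc : IsCompact (φinv '' closedBall (0 : Euc n) r) :=
    (isCompact_closedBall _ _).image_of_continuousOn (hφinv.continuousOn.mono hball)
  have hVK : V ⊆ φinv '' closedBall (0 : Euc n) r := by
    intro x hx
    exact ⟨φ x, ball_subset_closedBall (hVb x hx), hxV_self x hx⟩
  have hclV : closure V ⊆ φinv '' closedBall (0 : Euc n) r :=
    closure_minimal hVK hKc.isClosed
  have hKU : φinv '' closedBall (0 : Euc n) r ⊆ U := by
    rintro y ⟨z, hz, hzy⟩
    obtain ⟨x, hxU, hxz⟩ := hball hz
    rw [← hzy, ← hxz, hinv.1 hxU]; exact hxU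
  have hclVU : closure V ⊆ U := hclV.trans hKU
  have hclVc : IsCompact (closure V) := hKc.of_isClosed_subset isClosed_closure hclV
  -- differentiability facts
  have hφd : ∀ x ∈ U, HasFDerivAt φ (fderiv ℝ φ x) x := fun x hx =>
    ((hφ.differentiableOn one_ne_zero).differentiableAt (hU.mem_nhds hx)).hasFDerivAt
  have hψd : ∀ y ∈ φ '' U, HasFDerivAt φinv (fderiv ℝ φinv y) y := fun y hy =>
    ((hφinv.differentiableOn one_ne_zero).differentiableAt (hφim.mem_nhds hy)).hasFDerivAt
  have hfd : ∀ x ∈ U, HasFDerivAt f (fderiv ℝ f x) x := fun x hx =>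
    ((hf.differentiableOn one_ne_zero).differentiableAt (hU.mem_nhds hx)).hasFDerivAt
  have hφ' : ContinuousOn (fderiv ℝ φ) U :=
    hφ.continuousOn_fderiv_of_isOpen hU le_rfl
  have hψ' : ContinuousOn (fderiv ℝ φinv) (φ '' U) :=
    hφinv.continuousOn_fderiv_of_isOpen hφim le_rfl
  -- bounds
  obtain ⟨Cφ0, hCφ0⟩ := hclVc.exists_bound_of_continuousOn (hφ'.mono hclVU)
  set Cφ : ℝ := max Cφ0 0 with hCφdef
  have hCφ : ∀ x ∈ closure V, ‖fderiv ℝ φ x‖ ≤ Cφ := fun x hx =>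
    (hCφ0 x hx).trans (le_max_left _ _)
  have hCφnn : (0:ℝ) ≤ Cφ := le_max_right _ _
  obtain ⟨Cψ0, hCψ0⟩ :=
    (isCompact_closedBall (0 : Euc n) r).exists_bound_of_continuousOn (hψ'.mono hball)
  set Cψ : ℝ := max Cψ0 0 with hCψdef
  have hCψ : ∀ y ∈ closedBall (0 : Euc n) r, ‖fderiv ℝ φinv y‖ ≤ Cψ := fun y hy =>
    (hCψ0 y hy).trans (le_max_left _ _)
  have hCψnn : (0:ℝ) ≤ Cψ := le_max_right _ _
  -- uniform continuity
  have uψ := Metric.uniformContinuousOn_iff.1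
    ((isCompact_closedBall (0 : Euc n) r).uniformContinuousOn_of_continuous
      (hφinv.continuousOn.mono hball))
  have uψ' := Metric.uniformContinuousOn_iff.1
    ((isCompact_closedBall (0 : Euc n) r).uniformContinuousOn_of_continuous (hψ'.mono hball))
  have uf := Metric.uniformContinuousOn_iff.1
    (hclVc.uniformContinuousOn_of_continuous hfc)
  have uf' := Metric.uniformContinuousOn_iff.1
    (hclVc.uniformContinuousOn_of_continuous hfdc)
  -- the chain-rule identity D(φinv)(φ x) ∘ Dφ(x) = id on V
  have hDid : ∀ x ∈ V,
      (fderiv ℝ φinv (φ x)).comp (fderiv ℝ φ x) = ContinuousLinearMap.id ℝ (Euc n) := by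
    intro x hx
    have h1 := hφd x (hVU hx)
    have h2 := hψd (φ x) (mem_image_of_mem φ (hVU hx))
    have hcomp := h2.comp x h1
    have hid : HasFDerivAt (φinv ∘ φ) (ContinuousLinearMap.id ℝ (Euc n)) x := by
      refine (hasFDerivAt_id x).congr_of_eventuallyEq ?_
      filter_upwards [hU.mem_nhds (hVU hx)] with z hz
      exact hinv.1 hz
    exact hcomp.unique hid
  -- θ maps φ(V) into the ball
  have hθball : ∀ (θ : Euc n ≃ₗᵢ[ℝ] Euc n), ∀ x ∈ V, θ (φ x) ∈ ball (0 : Euc n) r := by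
    intro θ x hx
    have hb := hVb x hx
    rw [mem_ball_zero_iff] at hb ⊢
    rwa [θ.norm_map]
  -- derivative of Ξ_θ
  have hΞd : ∀ (θ : Euc n ≃ₗᵢ[ℝ] Euc n), ∀ x ∈ V,
      HasFDerivAt (fun y => φinv (θ (φ y)))
        ((fderiv ℝ φinv (θ (φ x))).comp
          ((θ.toLinearIsometry.toContinuousLinearMap).comp (fderiv ℝ φ x))) x := by
    intro θ x hx
    have h1 := hφd x (hVU hx)
    have h2 : HasFDerivAt (fun z => θ z) θ.toLinearIsometry.toContinuousLinearMap (φ x) :=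
      θ.toLinearIsometry.toContinuousLinearMap.hasFDerivAt
    have h3 := hψd (θ (φ x)) (hballU (hθball θ x hx))
    exact h3.comp x (h2.comp x h1)
  -- Ξ_θ maps V into V
  have hΞmem : ∀ (θ : Euc n ≃ₗᵢ[ℝ] Euc n), ∀ x ∈ V, φinv (θ (φ x)) ∈ V := by
    intro θ x hx
    exact (hinv_mem _ (hθball θ x hx)).1
  -- image equality
  have himg : ∀ (θ : Euc n ≃ₗᵢ[ℝ] Euc n), (fun y => φinv (θ (φ y))) '' V = V := by
    intro θ
    apply Subset.antisymm
    · rintro _ ⟨x, hx, rfl⟩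
      exact hΞmem θ x hx
    · intro x hx
      have hb := hVb x hx
      have hsb : θ.symm (φ x) ∈ ball (0 : Euc n) r := by
        rw [mem_ball_zero_iff] at hb ⊢
        rwa [θ.symm.norm_map]
      obtain ⟨hxV', hφx'⟩ := hinv_mem _ hsb
      refine ⟨φinv (θ.symm (φ x)), hxV', ?_⟩
      show φinv (θ (φ (φinv (θ.symm (φ x))))) = x
      rw [hφx', θ.apply_symm_apply, hxV_self x hx]
  -- key quantitative estimate
  have key : ∀ ε' > (0:ℝ), ∃ ρ > (0:ℝ), ∀ θ : Euc n ≃ₗᵢ[ℝ] Euc n, opDistId n θ < ρ →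
      ∀ x ∈ V, ‖φinv (θ (φ x)) - x‖ ≤ ε' ∧
        ‖fderiv ℝ (fun y => φinv (θ (φ y))) x - ContinuousLinearMap.id ℝ (Euc n)‖ ≤ ε' := by
    intro ε' hε'
    obtain ⟨δv, hδv, hδvP⟩ := uψ ε' hε'
    obtain ⟨δψ, hδψ, hδψP⟩ := uψ' (ε' / (2 * (Cφ + 1))) (div_pos hε' (by linarith))
    refine ⟨min (min (δv / (2 * r)) (δψ / (2 * r))) (ε' / (2 * (Cψ + 1) * (Cφ + 1))),
      lt_min (lt_min (div_pos hδv (by linarith)) (div_pos hδψ (by linarith)))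
        (div_pos hε' (mul_pos (mul_pos two_pos (by linarith)) (by linarith))), ?_⟩
    intro θ hθ x hx
    set A := θ.toLinearIsometry.toContinuousLinearMap with hAdef
    have hopd : opDistId n θ = ‖A - ContinuousLinearMap.id ℝ (Euc n)‖ := rfl
    have hopdnn : (0:ℝ) ≤ opDistId n θ := by rw [hopd]; exact norm_nonneg _
    have hb := hVb x hx
    have hθb := hθball θ x hx
    have hφxr : ‖φ x‖ ≤ r := by
      rw [mem_ball_zero_iff] at hb; exact hb.le
    have hdistb : dist (θ (φ x)) (φ x) ≤ opDistId n θ * r := by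
      have hAφ : A (φ x) = θ (φ x) := rfl
      have he : θ (φ x) - φ x = (A - ContinuousLinearMap.id ℝ (Euc n)) (φ x) := by
        rw [ContinuousLinearMap.sub_apply, hAφ, ContinuousLinearMap.id_apply]
      rw [dist_eq_norm, he, hopd]
      calc ‖(A - ContinuousLinearMap.id ℝ (Euc n)) (φ x)‖
          ≤ ‖A - ContinuousLinearMap.id ℝ (Euc n)‖ * ‖φ x‖ :=
            (A - ContinuousLinearMap.id ℝ (Euc n)).le_opNorm _
        _ ≤ ‖A - ContinuousLinearMap.id ℝ (Euc n)‖ * r :=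
            mul_le_mul_of_nonneg_left hφxr (norm_nonneg _)
    have hρv : opDistId n θ < δv / (2 * r) :=
      hθ.trans_le ((min_le_left _ _).trans (min_le_left _ _))
    have hρψ : opDistId n θ < δψ / (2 * r) :=
      hθ.trans_le ((min_le_left _ _).trans (min_le_right _ _))
    have hρε : opDistId n θ < ε' / (2 * (Cψ + 1) * (Cφ + 1)) :=
      hθ.trans_le (min_le_right _ _)
    have hdv : dist (θ (φ x)) (φ x) < δv := by
      have h1 : opDistId n θ * r < (δv / (2 * r)) * r := mul_lt_mul_of_pos_right hρv hr
      have h2 : (δv / (2 * r)) * r = δv / 2 := by field_simp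
      linarith
    have hdψ : dist (θ (φ x)) (φ x) < δψ := by
      have h1 : opDistId n θ * r < (δψ / (2 * r)) * r := mul_lt_mul_of_pos_right hρψ hr
      have h2 : (δψ / (2 * r)) * r = δψ / 2 := by field_simp
      linarith
    have hθbc : θ (φ x) ∈ closedBall (0 : Euc n) r := ball_subset_closedBall hθb
    have hbc : φ x ∈ closedBall (0 : Euc n) r := ball_subset_closedBall hb
    constructor
    · -- value estimate
      have hval := hδvP _ hθbc _ hbc hdv
      rw [dist_eq_norm, hxV_self x hx] at hval
      exact hval.le
    · -- derivative estimate
      rw [(hΞd θ x hx).fderiv, ← hDid x hx]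
      have e1 : (fderiv ℝ φinv (θ (φ x))).comp (A.comp (fderiv ℝ φ x)) -
            (fderiv ℝ φinv (φ x)).comp (fderiv ℝ φ x)
          = (((fderiv ℝ φinv (θ (φ x))).comp A) - fderiv ℝ φinv (φ x)).comp (fderiv ℝ φ x) := by
        rw [ContinuousLinearMap.sub_comp, ← ContinuousLinearMap.comp_assoc]
      rw [e1]
      have hB : ‖(fderiv ℝ φinv (θ (φ x))).comp A - fderiv ℝ φinv (φ x)‖
          ≤ Cψ * opDistId n θ + ε' / (2 * (Cφ + 1)) := by
        have e2 : (fderiv ℝ φinv (θ (φ x))).comp A - fderiv ℝ φinv (φ x)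
            = (fderiv ℝ φinv (θ (φ x))).comp (A - ContinuousLinearMap.id ℝ (Euc n)) +
              (fderiv ℝ φinv (θ (φ x)) - fderiv ℝ φinv (φ x)) := by
          rw [ContinuousLinearMap.comp_sub, ContinuousLinearMap.comp_id]
          abel
        rw [e2]
        refine (norm_add_le _ _).trans (add_le_add ?_ ?_)
        · calc ‖(fderiv ℝ φinv (θ (φ x))).comp (A - ContinuousLinearMap.id ℝ (Euc n))‖
              ≤ ‖fderiv ℝ φinv (θ (φ x))‖ * ‖A - ContinuousLinearMap.id ℝ (Euc n)‖ :=
                ContinuousLinearMap.opNorm_comp_le _ _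
            _ ≤ Cψ * opDistId n θ := by
                rw [hopd]
                exact mul_le_mul_of_nonneg_right (hCψ _ hθbc) (norm_nonneg _)
        · have hder := hδψP _ hθbc _ hbc hdψ
          rw [dist_eq_norm] at hder
          exact hder.le
      calc ‖(((fderiv ℝ φinv (θ (φ x))).comp A) - fderiv ℝ φinv (φ x)).comp (fderiv ℝ φ x)‖
          ≤ ‖((fderiv ℝ φinv (θ (φ x))).comp A) - fderiv ℝ φinv (φ x)‖ * ‖fderiv ℝ φ x‖ :=
            ContinuousLinearMap.opNorm_comp_le _ _
        _ ≤ (Cψ * opDistId n θ + ε' / (2 * (Cφ + 1))) * Cφ := by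
            apply mul_le_mul hB (hCφ x (subset_closure hx)) (norm_nonneg _)
            exact add_nonneg (mul_nonneg hCψnn hopdnn)
              (le_of_lt (div_pos hε' (by linarith)))
        _ ≤ ε' := by
            have h1 : Cψ * opDistId n θ * Cφ ≤ ε' / 2 :=
              mul_bound_aux Cψ Cφ (opDistId n θ) ε' hCψnn hCφnn hε' hopdnn hρε.le
            have h2 : ε' / (2 * (Cφ + 1)) * Cφ ≤ ε' / 2 := by
              have ha : ε' / (2 * (Cφ + 1)) * Cφ ≤ ε' / (2 * (Cφ + 1)) * (Cφ + 1) :=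
                mul_le_mul_of_nonneg_left (by linarith)
                  (le_of_lt (div_pos hε' (by linarith)))
              have hb' : ε' / (2 * (Cφ + 1)) * (Cφ + 1) = ε' / 2 := by
                field_simp
              linarith
            nlinarith
  -- assemble
  obtain ⟨M0, hM0⟩ := hfbdd
  set M : ℝ := max M0 0 with hMdef
  have hM : ∀ x ∈ closure V, ‖f x‖ ≤ M ∧ ‖fderiv ℝ f x‖ ≤ M := fun x hx =>
    ⟨(hM0 x hx).1.trans (le_max_left _ _), (hM0 x hx).2.trans (le_max_left _ _)⟩
  have hMnn : (0:ℝ) ≤ M := le_max_right _ _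
  obtain ⟨δf, hδfpos, hδfP⟩ := uf (ε / 2) (by positivity)
  obtain ⟨δdf, hδdfpos, hδdfP⟩ := uf' (ε / 4) (by positivity)
  set ε' : ℝ := min (min (ε / 2) (δf / 2)) (min (δdf / 2) (ε / (4 * (M + 1)))) with hε'def
  have hε'pos : 0 < ε' :=
    lt_min (lt_min (by positivity) (by positivity))
      (lt_min (by positivity) (div_pos hε (by linarith)))
  have hε'1 : ε' ≤ ε / 2 := (min_le_left _ _).trans (min_le_left _ _)
  have hε'2 : ε' ≤ δf / 2 := (min_le_left _ _).trans (min_le_right _ _)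
  have hε'3 : ε' ≤ δdf / 2 := (min_le_right _ _).trans (min_le_left _ _)
  have hε'4 : ε' ≤ ε / (4 * (M + 1)) := (min_le_right _ _).trans (min_le_right _ _)
  obtain ⟨ρ, hρpos, hkey⟩ := key ε' hε'pos
  refine ⟨ρ, hρpos, ?_⟩
  intro θ hSO hθρ
  have hk := hkey θ hθρ
  refine ⟨himg θ, ?_, ?_⟩
  · -- C¹ bound for Ξ_θ − id
    unfold C1Dist
    have h1 : (⨆ x : V, ‖(fun y => φinv (θ (φ y))) (x : Euc n) - id (x : Euc n)‖) ≤ ε / 2 := by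
      apply Real.iSup_le _ (by positivity)
      rintro ⟨x, hx⟩
      simp only [id_eq]
      exact (hk x hx).1.trans hε'1
    have h2 : (⨆ x : V, ‖fderiv ℝ (fun y => φinv (θ (φ y))) (x : Euc n) -
        fderiv ℝ (id : Euc n → Euc n) (x : Euc n)‖) ≤ ε / 2 := by
      apply Real.iSup_le _ (by positivity)
      rintro ⟨x, hx⟩
      rw [fderiv_id]
      exact (hk x hx).2.trans hε'1
    linarith
  · -- C¹ bound for f ∘ Ξ_θ − f
    unfold C1Dist
    have hmemcl : ∀ x ∈ V, φinv (θ (φ x)) ∈ closure V := fun x hx =>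
      subset_closure (hΞmem θ x hx)
    have h1 : (⨆ x : V, ‖(f ∘ fun y => φinv (θ (φ y))) (x : Euc n) - f (x : Euc n)‖) ≤ ε / 2 := by
      apply Real.iSup_le _ (by positivity)
      rintro ⟨x, hx⟩
      have hdx : dist (φinv (θ (φ x))) x < δf := by
        have h := (hk x hx).1
        rw [dist_eq_norm]
        linarith
      have hval := hδfP _ (hmemcl x hx) _ (subset_closure hx) hdx
      rw [dist_eq_norm] at hval
      simp only [Function.comp_apply]
      exact hval.le
    have h2 : (⨆ x : V, ‖fderiv ℝ (f ∘ fun y => φinv (θ (φ y))) (x : Euc n) -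
        fderiv ℝ f (x : Euc n)‖) ≤ ε / 2 := by
      apply Real.iSup_le _ (by positivity)
      rintro ⟨x, hx⟩
      have hΞV := hΞmem θ x hx
      have hΞ' : HasFDerivAt (fun y => φinv (θ (φ y)))
          (fderiv ℝ (fun y => φinv (θ (φ y))) x) x :=
        (hΞd θ x hx).differentiableAt.hasFDerivAt
      have hcomp := (hfd _ (hVU hΞV)).comp x hΞ'
      rw [hcomp.fderiv]
      set a := fderiv ℝ f (φinv (θ (φ x))) with hadef
      set b := fderiv ℝ (fun y => φinv (θ (φ y))) x with hbdef
      set c := fderiv ℝ f x with hcdef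
      have e : a.comp b - c = a.comp (b - ContinuousLinearMap.id ℝ (Euc n)) + (a - c) := by
        rw [ContinuousLinearMap.comp_sub, ContinuousLinearMap.comp_id]
        abel
      rw [e]
      have t1 : ‖a.comp (b - ContinuousLinearMap.id ℝ (Euc n))‖ ≤ M * ε' := by
        refine (ContinuousLinearMap.opNorm_comp_le _ _).trans ?_
        exact mul_le_mul (hM _ (hmemcl x hx)).2 (hk x hx).2 (norm_nonneg _) hMnn
      have t1' : M * ε' ≤ ε / 4 := by
        have hc1 : M * ε' ≤ M * (ε / (4 * (M + 1))) := mul_le_mul_of_nonneg_left hε'4 hMnn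
        have hc2 : M * (ε / (4 * (M + 1))) ≤ (M + 1) * (ε / (4 * (M + 1))) :=
          mul_le_mul_of_nonneg_right (by linarith)
            (le_of_lt (div_pos hε (by linarith)))
        have hc3 : (M + 1) * (ε / (4 * (M + 1))) = ε / 4 := by
          field_simp
        linarith
      have t2 : ‖a - c‖ < ε / 4 := by
        have hdx : dist (φinv (θ (φ x))) x < δdf := by
          have h := (hk x hx).1
          rw [dist_eq_norm]
          linarith
        have hder := hδdfP _ (hmemcl x hx) _ (subset_closure hx) hdx
        rw [dist_eq_norm] at hder
        exact hder
      have tadd := norm_add_le (a.comp (b - ContinuousLinearMap.id ℝ (Euc n))) (a - c)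
      linarith
    linarith

end
end
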